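/- For any l ≥ 1 and any u in H^l_0(0,L), the sup norm satisfies ‖u‖_∞ ≤ √2 · ‖D^l u‖_{L^2}^{1/(2l)} · ‖u‖_{L^2}^{1 − 1/(2l)}. -/

import Mathlib

open MeasureTheory intervalIntegral Set

/-- Cauchy–Schwarz for real integrals. -/
lemma my_cs_aux {μ : Measure ℝ} {f g : ℝ → ℝ} (hf : AEStronglyMeasurable f μ)
    (hg : AEStronglyMeasurable g μ)
    (hf2 : Integrable (fun x => f x ^ 2) μ) (hg2 : Integrable (fun x => g x ^ 2) μ) :
    ∫ x, |f x * g x| ∂μ ≤ Real.sqrt (∫ x, f x ^ 2 ∂μ) * Real.sqrt (∫ x, g x ^ 2 ∂μ) := by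
  have hconj : (2:ℝ).HolderConjugate 2 := Real.holderConjugate_iff.2 ⟨one_lt_two, by norm_num⟩
  have h2 : ENNReal.ofReal (2:ℝ) = 2 := by
    rw [show (2:ℝ) = ((2:ℕ):ℝ) by norm_num, ENNReal.ofReal_natCast]; norm_num
  have habs : ∀ h : ℝ → ℝ, AEStronglyMeasurable h μ →
      AEStronglyMeasurable (fun x => |h x|) μ := by
    intro h hh
    simpa [Real.norm_eq_abs] using hh.norm
  have hfm : MemLp (fun x => |f x|) (ENNReal.ofReal 2) μ := by
    rw [h2, memLp_two_iff_integrable_sq (habs f hf)]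
    simpa [sq_abs] using hf2
  have hgm : MemLp (fun x => |g x|) (ENNReal.ofReal 2) μ := by
    rw [h2, memLp_two_iff_integrable_sq (habs g hg)]
    simpa [sq_abs] using hg2
  have key := integral_mul_le_Lp_mul_Lq_of_nonneg hconj
    (f := fun x => |f x|) (g := fun x => |g x|)
    (ae_of_all _ fun x => abs_nonneg _) (ae_of_all _ fun x => abs_nonneg _) hfm hgm
  have hrpow : ∀ y : ℝ, y ^ (2:ℝ) = y ^ (2:ℕ) := by
    intro y; rw [show (2:ℝ) = ((2:ℕ):ℝ) by norm_num, Real.rpow_natCast]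
  simp only [hrpow, sq_abs, abs_mul] at key
  calc ∫ x, |f x * g x| ∂μ = ∫ x, |f x| * |g x| ∂μ := by simp [abs_mul]
    _ ≤ (∫ x, f x ^ 2 ∂μ) ^ ((1:ℝ)/2) * (∫ x, g x ^ 2 ∂μ) ^ ((1:ℝ)/2) := key
    _ = _ := by rw [Real.sqrt_eq_rpow, Real.sqrt_eq_rpow]

/-- Discrete log-convexity chain. -/
lemma my_chain_aux {l : ℕ} (a : ℕ → ℝ) (ha : ∀ i, 0 ≤ a i)
    (h : ∀ i, i + 2 ≤ l → a (i+1) ^ 2 ≤ a i * a (i+2)) (hl : 1 ≤ l) :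
    a 1 ^ l ≤ a 0 ^ (l-1) * a l := by
  have step : ∀ k, k + 1 ≤ l → a k * a 1 ≤ a 0 * a (k+1) := by
    intro k
    induction k with
    | zero => intro _; rw [mul_comm]
    | succ n ih =>
      intro hn1
      rcases eq_or_lt_of_le (ha (n+1)) with h0 | hpos
      · rw [← h0, zero_mul]
        exact mul_nonneg (ha 0) (ha (n+2))
      · have key := h n hn1
        have ihh := ih (by omega)
        have hmm : (a (n+1) * a 1) * a (n+1) ≤ (a 0 * a (n+1+1)) * a (n+1) := by
          nlinarith [mul_le_mul_of_nonneg_right key (ha 1),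
            mul_le_mul_of_nonneg_right ihh (ha (n+2)), ha (n+2), ha 0, ha 1, ha (n+1)]
        exact le_of_mul_le_mul_right hmm hpos
  have main : ∀ k, 1 ≤ k → k ≤ l → a 1 ^ k ≤ a 0 ^ (k-1) * a k := by
    intro k
    induction k with
    | zero => omega
    | succ n ih =>
      intro _ hkl
      cases n with
      | zero => simp
      | succ m =>
        have ihh := ih (by omega) (by omega)
        calc a 1 ^ (m+1+1) = a 1 ^ (m+1) * a 1 := by ring
          _ ≤ (a 0 ^ (m+1-1) * a (m+1)) * a 1 :=
              mul_le_mul_of_nonneg_right ihh (ha 1)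
          _ = a 0 ^ m * (a (m+1) * a 1) := by
              rw [mul_assoc]; norm_num
          _ ≤ a 0 ^ m * (a 0 * a (m+1+1)) :=
              mul_le_mul_of_nonneg_left (step (m+1) hkl) (pow_nonneg (ha 0) m)
          _ = a 0 ^ (m+1+1-1) * a (m+1+1) := by
              rw [show m+1+1-1 = m+1 by omega, pow_succ]; ring
  exact main l hl le_rfl

theorem stmt_3 (L : ℝ) (hL : 0 < L) (l : ℕ) (hl : 1 ≤ l) (D : ℕ → ℝ → ℝ)
    (hderiv : ∀ i < l, ∀ x ∈ Set.Icc (0:ℝ) L, HasDerivAt (D i) (D (i+1) x) x)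
    (hint : ∀ i ≤ l, IntervalIntegrable (fun x => (D i x)^2) MeasureTheory.volume 0 L)
    (hbc : ∀ i < l, D i 0 = 0 ∧ D i L = 0) :
    ∀ x ∈ Set.Icc (0:ℝ) L,
      |D 0 x| ≤ Real.sqrt 2 *
        (∫ x in (0:ℝ)..L, (D l x)^2) ^ (1/(4*(l:ℝ)))
        * (∫ x in (0:ℝ)..L, (D 0 x)^2) ^ ((1 - 1/(2*(l:ℝ)))/2) := by
  have hL' : (0:ℝ) ≤ L := hL.le
  have hlR : (l:ℝ) ≠ 0 := Nat.cast_ne_zero.2 (by omega)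
  set μ : Measure ℝ := volume.restrict (Ioc 0 L) with hμ
  -- continuity of D i for i < l
  have hcont : ∀ i < l, ContinuousOn (D i) (Icc 0 L) := fun i hi x hx =>
    ((hderiv i hi x hx).continuousAt).continuousWithinAt
  -- measurability of D i for i ≤ l
  have hmeas : ∀ i ≤ l, AEStronglyMeasurable (D i) μ := by
    intro i hi
    rcases lt_or_eq_of_le hi with hi' | rfl
    · exact ((hcont i hi').mono Ioc_subset_Icc_self).aestronglyMeasurable measurableSet_Ioc
    · have hll : i - 1 < i := by omega
      have heq : ∀ x ∈ Ioo (0:ℝ) L, deriv (D (i-1)) x = D i x := by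
        intro x hx
        have hd := hderiv (i-1) hll x (Ioo_subset_Icc_self hx)
        rw [show i - 1 + 1 = i by omega] at hd
        exact hd.deriv
      rw [hμ, ← Measure.restrict_congr_set (Ioo_ae_eq_Ioc (a := (0:ℝ)) (b := L))]
      exact ((measurable_deriv (D (i-1))).aestronglyMeasurable).congr
        ((ae_restrict_iff' measurableSet_Ioo).2 (ae_of_all _ heq))
  have hint' : ∀ i ≤ l, Integrable (fun x => (D i x)^2) μ :=
    fun i hi => (intervalIntegrable_iff_integrableOn_Ioc_of_le hL').1 (hint i hi)
  -- integrability of products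
  have hprod : ∀ i ≤ l, ∀ j ≤ l, Integrable (fun x => D i x * D j x) μ := by
    intro i hi j hj
    refine ((hint' i hi).add (hint' j hj)).mono'
      ((hmeas i hi).mul (hmeas j hj)) (ae_of_all _ fun x => ?_)
    simp only [Real.norm_eq_abs, Pi.add_apply]
    rcases abs_cases (D i x * D j x) with ⟨h1, _⟩ | ⟨h1, _⟩ <;>
      nlinarith [sq_nonneg (D i x - D j x), sq_nonneg (D i x + D j x)]
  have hprodI : ∀ i ≤ l, ∀ j ≤ l, IntervalIntegrable (fun x => D i x * D j x) volume 0 L :=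
    fun i hi j hj => (intervalIntegrable_iff_integrableOn_Ioc_of_le hL').2 (hprod i hi j hj)
  -- notation
  set A : ℕ → ℝ := fun i => ∫ x in (0:ℝ)..L, (D i x)^2 with hA
  set a : ℕ → ℝ := fun i => Real.sqrt (A i) with ha
  have hA_nonneg : ∀ i, 0 ≤ A i := fun i =>
    intervalIntegral.integral_nonneg hL' (fun x _ => sq_nonneg _)
  have ha_nonneg : ∀ i, 0 ≤ a i := fun i => Real.sqrt_nonneg _
  have ha_sq : ∀ i, a i ^ 2 = A i := fun i => Real.sq_sqrt (hA_nonneg i)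
  -- Cauchy-Schwarz in interval form
  have hCS : ∀ i ≤ l, ∀ j ≤ l, (∫ x in (0:ℝ)..L, |D i x * D j x|) ≤ a i * a j := by
    intro i hi j hj
    have key := my_cs_aux (hmeas i hi) (hmeas j hj) (hint' i hi) (hint' j hj)
    rw [intervalIntegral.integral_of_le hL']
    simp only [ha, hA, intervalIntegral.integral_of_le hL']
    exact key
  -- integration by parts
  have hIBP : ∀ i, 1 ≤ i → i + 1 ≤ l → A i ≤ a (i-1) * a (i+1) := by
    intro i h1 h2
    have hd : ∀ y ∈ uIcc (0:ℝ) L, HasDerivAt (fun z => D (i-1) z * D i z)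
        (D i y * D i y + D (i-1) y * D (i+1) y) y := by
      intro y hy
      rw [uIcc_of_le hL'] at hy
      have e1 := hderiv (i-1) (by omega) y hy
      rw [show i - 1 + 1 = i by omega] at e1
      have e2 := hderiv i (by omega) y hy
      exact e1.mul e2
    have hii : IntervalIntegrable
        (fun y => D i y * D i y + D (i-1) y * D (i+1) y) volume 0 L :=
      (hprodI i (by omega) i (by omega)).add (hprodI (i-1) (by omega) (i+1) h2)
    have hFTC := integral_eq_sub_of_hasDerivAt hd hii
    rw [intervalIntegral.integral_add (hprodI i (by omega) i (by omega))
      (hprodI (i-1) (by omega) (i+1) h2)] at hFTC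
    have hb := hbc (i-1) (by omega)
    simp only [hb.1, hb.2, zero_mul, sub_zero, sub_self] at hFTC
    have hAi : A i = - ∫ x in (0:ℝ)..L, D (i-1) x * D (i+1) x := by
      have : A i = ∫ x in (0:ℝ)..L, D i x * D i x := by
        simp only [hA, sq]
      linarith [this, hFTC]
    calc A i = - ∫ x in (0:ℝ)..L, D (i-1) x * D (i+1) x := hAi
      _ ≤ |∫ x in (0:ℝ)..L, D (i-1) x * D (i+1) x| := neg_le_abs _
      _ ≤ ∫ x in (0:ℝ)..L, |D (i-1) x * D (i+1) x| :=
          intervalIntegral.abs_integral_le_integral_abs hL'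
      _ ≤ a (i-1) * a (i+1) := hCS (i-1) (by omega) (i+1) h2
  -- chain
  have hchain : a 1 ^ l ≤ a 0 ^ (l-1) * a l := by
    refine my_chain_aux a ha_nonneg (fun i hi => ?_) hl
    rw [ha_sq]
    simpa using hIBP (i+1) (by omega) (by omega)
  intro x hx
  -- FTC bound
  have hux : (D 0 x)^2 ≤ 2 * (a 0 * a 1) := by
    have hd : ∀ y ∈ uIcc (0:ℝ) x, HasDerivAt (fun z => D 0 z * D 0 z)
        (D 1 y * D 0 y + D 0 y * D 1 y) y := by
      intro y hy
      rw [uIcc_of_le hx.1] at hy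
      have hy' : y ∈ Icc (0:ℝ) L := ⟨hy.1, hy.2.trans hx.2⟩
      exact (hderiv 0 (by omega) y hy').mul (hderiv 0 (by omega) y hy')
    have hiL : IntervalIntegrable (fun y => D 1 y * D 0 y + D 0 y * D 1 y) volume 0 L :=
      (hprodI 1 hl 0 (by omega)).add (hprodI 0 (by omega) 1 hl)
    have hix : IntervalIntegrable (fun y => D 1 y * D 0 y + D 0 y * D 1 y) volume 0 x :=
      hiL.mono_set (by
        rw [uIcc_of_le hL', uIcc_of_le hx.1]
        exact Icc_subset_Icc le_rfl hx.2)
    have hFTC := integral_eq_sub_of_hasDerivAt hd hix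
    have hb := hbc 0 (by omega)
    simp only [hb.1, mul_zero, sub_zero] at hFTC
    have habs : ∀ y : ℝ, |D 1 y * D 0 y + D 0 y * D 1 y| = 2 * |D 0 y * D 1 y| := by
      intro y
      rw [show D 1 y * D 0 y + D 0 y * D 1 y = 2 * (D 0 y * D 1 y) by ring,
        abs_mul, abs_two]
    calc (D 0 x)^2 = ∫ y in (0:ℝ)..x, (D 1 y * D 0 y + D 0 y * D 1 y) := by
          rw [hFTC]; ring
      _ ≤ |∫ y in (0:ℝ)..x, (D 1 y * D 0 y + D 0 y * D 1 y)| := le_abs_self _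
      _ ≤ ∫ y in (0:ℝ)..x, |D 1 y * D 0 y + D 0 y * D 1 y| :=
          intervalIntegral.abs_integral_le_integral_abs hx.1
      _ ≤ ∫ y in (0:ℝ)..L, |D 1 y * D 0 y + D 0 y * D 1 y| := by
          refine intervalIntegral.integral_mono_interval le_rfl hx.1 hx.2
            (ae_of_all _ fun y => abs_nonneg _) hiL.abs
      _ = 2 * ∫ y in (0:ℝ)..L, |D 0 y * D 1 y| := by
          simp only [habs]
          rw [intervalIntegral.integral_const_mul]
      _ ≤ 2 * (a 0 * a 1) := by
          have := hCS 0 (by omega) 1 hl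
          linarith
  -- final algebra
  show |D 0 x| ≤ Real.sqrt 2 * A l ^ (1/(4*(l:ℝ))) * A 0 ^ ((1 - 1/(2*(l:ℝ)))/2)
  have hRHS0 : 0 ≤ Real.sqrt 2 * A l ^ (1/(4*(l:ℝ))) * A 0 ^ ((1 - 1/(2*(l:ℝ)))/2) :=
    mul_nonneg (mul_nonneg (Real.sqrt_nonneg _) (Real.rpow_nonneg (hA_nonneg l) _))
      (Real.rpow_nonneg (hA_nonneg 0) _)
  rw [← pow_le_pow_iff_left₀ (abs_nonneg _) hRHS0 (show 2*l ≠ 0 by omega)]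
  -- compute RHS^(2l)
  have e1calc : (A l ^ (1/(4*(l:ℝ)))) ^ (2*l : ℕ) = a l := by
    rw [← Real.rpow_natCast (A l ^ (1/(4*(l:ℝ)))) (2*l),
      ← Real.rpow_mul (hA_nonneg l),
      show (1/(4*(l:ℝ))) * ((2*l : ℕ) : ℝ) = 1/2 by push_cast; field_simp; ring,
      ← Real.sqrt_eq_rpow]
  have e2calc : (A 0 ^ ((1 - 1/(2*(l:ℝ)))/2)) ^ (2*l : ℕ) = a 0 ^ (2*l - 1 : ℕ) := by
    rw [← Real.rpow_natCast (A 0 ^ ((1 - 1/(2*(l:ℝ)))/2)) (2*l),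
      ← Real.rpow_mul (hA_nonneg 0)]
    have : a 0 ^ (2*l - 1 : ℕ) = A 0 ^ (((2*l - 1 : ℕ) : ℝ) / 2) := by
      rw [show a 0 = A 0 ^ ((1:ℝ)/2) from Real.sqrt_eq_rpow _,
        ← Real.rpow_natCast (A 0 ^ ((1:ℝ)/2)) (2*l-1),
        ← Real.rpow_mul (hA_nonneg 0)]
      ring_nf
    rw [this]
    congr 1
    have hcast : ((2*l - 1 : ℕ) : ℝ) = 2*(l:ℝ) - 1 := by
      push_cast [Nat.cast_sub (show 1 ≤ 2*l by omega)]; ring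
    rw [hcast]
    push_cast
    field_simp
  have hRHSpow : (Real.sqrt 2 * A l ^ (1/(4*(l:ℝ))) * A 0 ^ ((1 - 1/(2*(l:ℝ)))/2)) ^ (2*l : ℕ)
      = 2^l * a l * a 0 ^ (2*l - 1 : ℕ) := by
    rw [mul_pow, mul_pow, e1calc, e2calc, pow_mul,
      Real.sq_sqrt (by norm_num : (0:ℝ) ≤ 2)]
  rw [hRHSpow]
  -- LHS bound
  have hLHS : |D 0 x| ^ (2*l : ℕ) ≤ 2^l * (a 0 ^ l * a 1 ^ l) := by
    calc |D 0 x| ^ (2*l : ℕ) = (|D 0 x| ^ 2) ^ l := by rw [← pow_mul]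
      _ = ((D 0 x)^2) ^ l := by rw [sq_abs]
      _ ≤ (2 * (a 0 * a 1)) ^ l := pow_le_pow_left₀ (sq_nonneg _) hux l
      _ = 2^l * (a 0 ^ l * a 1 ^ l) := by rw [mul_pow, mul_pow]
  refine hLHS.trans ?_
  have h2 : a 0 ^ l * a 1 ^ l ≤ a 0 ^ l * (a 0 ^ (l-1) * a l) :=
    mul_le_mul_of_nonneg_left hchain (pow_nonneg (ha_nonneg 0) l)
  have h3 : a 0 ^ l * (a 0 ^ (l-1) * a l) = a l * a 0 ^ (2*l - 1 : ℕ) := by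
    rw [show a 0 ^ l * (a 0 ^ (l-1) * a l) = (a 0 ^ l * a 0 ^ (l-1)) * a l by ring,
      ← pow_add, show l + (l-1) = 2*l - 1 by omega]
    ring
  calc 2^l * (a 0 ^ l * a 1 ^ l) ≤ 2^l * (a 0 ^ l * (a 0 ^ (l-1) * a l)) :=
        mul_le_mul_of_nonneg_left h2 (by positivity)
    _ = 2^l * a l * a 0 ^ (2*l - 1 : ℕ) := by rw [h3]; ring
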